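/- Let g be an n×n matrix over K such that g·A·g† = A for every n×n Hermitian matrix A over K. Then there exists λ ∈ K with λ·c(λ) = 1 such that g = λ·1ₙ (a scalar matrix). (The kernel of the conjugation action of the unitary group on Hermitian matrices is its center.) -/

import Mathlib

open Matrix

/-- The conjugate transpose `g† = (g.map c)ᵀ` of a matrix over `K`, with respect to the
involution `c` of `K`. -/
def dagger {K : Type*} [Field K] {n : ℕ} (c : K ≃+* K)
    (A : Matrix (Fin n) (Fin n) K) : Matrix (Fin n) (Fin n) K :=
  (A.map c)ᵀ

section aux
variable {K : Type*} [Field K] {n : ℕ} (c : K ≃+* K)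

lemma dagger_one : dagger c (1 : Matrix (Fin n) (Fin n) K) = 1 := by
  unfold dagger
  ext i j
  simp [Matrix.one_apply, transpose_apply, apply_ite, eq_comm]

lemma dagger_add (A B : Matrix (Fin n) (Fin n) K) :
    dagger c (A + B) = dagger c A + dagger c B := by
  unfold dagger; ext i j; simp

lemma dagger_smul (a : K) (A : Matrix (Fin n) (Fin n) K) :
    dagger c (a • A) = c a • dagger c A := by
  unfold dagger; ext i j; simp

lemma dagger_sub (A B : Matrix (Fin n) (Fin n) K) :
    dagger c (A - B) = dagger c A - dagger c B := by
  unfold dagger; ext i j; simp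

lemma dagger_dagger (hcc : ∀ x, c (c x) = x) (A : Matrix (Fin n) (Fin n) K) :
    dagger c (dagger c A) = A := by
  unfold dagger; ext i j; simp [hcc]

end aux

/-- `K` is a field of characteristic zero with a ring automorphism `c` satisfying `c ∘ c = id`
and `c ≠ id`.  If `g` is an `n × n` matrix over `K` with `g A g† = A` for every Hermitian
`n × n` matrix `A`, then `g = λ · 1ₙ` is a scalar matrix for some `λ ∈ K` with
`λ · c λ = 1`: the kernel of the conjugation action of the unitary group on Hermitian
matrices is its center. -/
theorem fixing_all_hermitian_is_central
    {K : Type*} [Field K] [CharZero K] (c : K ≃+* K)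
    (hcc : ∀ x, c (c x) = x) (hne : (c : K → K) ≠ id)
    {n : ℕ} (g : Matrix (Fin n) (Fin n) K)
    (hg : ∀ A : Matrix (Fin n) (Fin n) K, dagger c A = A → g * A * dagger c g = A) :
    ∃ lam : K, lam * c lam = 1 ∧ g = lam • (1 : Matrix (Fin n) (Fin n) K) := by
  rcases Nat.eq_zero_or_pos n with hn | hn
  · subst hn
    exact ⟨1, by simp, Subsingleton.elim _ _⟩
  -- δ with c δ = -δ, δ ≠ 0
  obtain ⟨x, hx⟩ : ∃ x, c x ≠ x := by
    by_contra h
    push_neg at h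
    exact hne (funext h)
  set δ : K := x - c x with hδdef
  have hδc : c δ = -δ := by simp [hδdef, hcc, neg_sub]
  have hδ0 : δ ≠ 0 := sub_ne_zero.mpr (Ne.symm hx)
  -- g g† = 1
  have hgg : g * dagger c g = 1 := by
    have := hg 1 (dagger_one c)
    rwa [mul_one] at this
  have hgg' : dagger c g * g = 1 := mul_eq_one_comm.mp hgg
  -- every matrix satisfies g A g† = A
  have hall : ∀ A : Matrix (Fin n) (Fin n) K, g * A * dagger c g = A := by
    intro A
    have h2 : (2 : K) ≠ 0 := two_ne_zero
    set H1 := (2 : K)⁻¹ • (A + dagger c A) with hH1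
    set H2 := (2 * δ)⁻¹ • (A - dagger c A) with hH2
    have hH1herm : dagger c H1 = H1 := by
      rw [hH1, dagger_smul, dagger_add, dagger_dagger c hcc, map_inv₀, map_ofNat,
        add_comm]
    have hH2herm : dagger c H2 = H2 := by
      rw [hH2, dagger_smul, dagger_sub, dagger_dagger c hcc, map_inv₀, _root_.map_mul,
        map_ofNat, hδc]
      rw [show (2 * -δ)⁻¹ = -(2 * δ)⁻¹ by field_simp]
      rw [neg_smul, ← smul_neg, neg_sub]
    have hdecomp : A = H1 + δ • H2 := by
      rw [hH1, hH2, smul_smul]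
      rw [show δ * (2 * δ)⁻¹ = (2 : K)⁻¹ by field_simp]
      rw [← smul_add]
      rw [show A + dagger c A + (A - dagger c A) = (2 : K) • A by
        module]
      rw [smul_smul, inv_mul_cancel₀ h2, one_smul]
    calc g * A * dagger c g = g * (H1 + δ • H2) * dagger c g := by rw [← hdecomp]
      _ = g * H1 * dagger c g + δ • (g * H2 * dagger c g) := by
          simp [mul_add, add_mul, Matrix.mul_smul, Matrix.smul_mul]
      _ = H1 + δ • H2 := by rw [hg H1 hH1herm, hg H2 hH2herm]
      _ = A := hdecomp.symm
  -- g commutes with everything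
  have hcomm : ∀ A : Matrix (Fin n) (Fin n) K, A * g = g * A := by
    intro A
    calc A * g = (g * A * dagger c g) * g := by rw [hall]
      _ = g * A * (dagger c g * g) := by rw [mul_assoc]
      _ = g * A := by rw [hgg', mul_one]
  obtain ⟨lam, hlam⟩ := mem_range_scalar_of_commute_single
    (M := g) (fun i j _ => hcomm _)
  have hglam : g = lam • (1 : Matrix (Fin n) (Fin n) K) := by
    rw [← hlam]; ext i j; simp [Matrix.scalar_apply, Matrix.diagonal_apply, Matrix.smul_apply, Matrix.one_apply]
  refine ⟨lam, ?_, hglam⟩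
  have := hgg
  rw [hglam, dagger_smul, dagger_one, smul_mul_assoc, mul_smul_comm, mul_one,
    smul_smul] at this
  have := congrArg (fun M => M ⟨0, hn⟩ ⟨0, hn⟩) this
  simpa using this
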